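/- arXiv:2506.20908 — 7 statements merged into one kernel-verified Lean document; each statement's English description precedes it below -/
import Mathlib

section
/- Let t ∈ (0,1], η ∈ [0,1), and μ > 0, and define γ = (1/t)·(1 − (1 − t·η)/e^{t/μ}). If additionally (when t < 1) μ ≥ t / ln((1 − t·η)/(1 − t)), then η ≤ γ ≤ 1. -/
/-- For t ∈ (0,1], η ∈ [0,1), μ > 0 and
γ = (1/t)·(1 − (1 − t·η)/e^{t/μ}), if (when t < 1)
μ ≥ t / ln((1 − t·η)/(1 − t)), then η ≤ γ ≤ 1. -/
theorem stmt_0 (t η μ γ : ℝ)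
    (ht : t ∈ Set.Ioc (0:ℝ) 1) (hη : η ∈ Set.Ico (0:ℝ) 1) (hμ : 0 < μ)
    (hμ' : t < 1 → μ ≥ t / Real.log ((1 - t * η) / (1 - t)))
    (hγ : γ = (1 / t) * (1 - (1 - t * η) / Real.exp (t / μ))) :
    η ≤ γ ∧ γ ≤ 1 := by
  obtain ⟨ht0, ht1⟩ := ht
  obtain ⟨hη0, hη1⟩ := hη
  have htη : t * η < 1 := by nlinarith
  have hpos : 0 < 1 - t * η := by linarith
  have hE : 0 < Real.exp (t / μ) := Real.exp_pos _
  have hE1 : 1 ≤ Real.exp (t / μ) := Real.one_le_exp (by positivity)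
  constructor
  · have h1 : (1 - t * η) / Real.exp (t / μ) ≤ 1 - t * η :=
      div_le_self hpos.le hE1
    rw [hγ]
    rw [ge_iff_le] at *
    have : η * t ≤ 1 - (1 - t * η) / Real.exp (t / μ) := by nlinarith
    calc η = (1/t) * (η * t) := by field_simp
    _ ≤ (1/t) * (1 - (1 - t * η) / Real.exp (t / μ)) := by
        apply mul_le_mul_of_nonneg_left this (by positivity)
  · have key : Real.exp (t / μ) * (1 - t) ≤ 1 - t * η := by
      rcases eq_or_lt_of_le ht1 with h | h
      · rw [h]; norm_num; linarith
      · have hμ'' := hμ' h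
        have h1t : 0 < 1 - t := by linarith
        have hR : 1 < (1 - t * η) / (1 - t) := by
          rw [lt_div_iff₀ h1t]; nlinarith
        have hL : 0 < Real.log ((1 - t * η) / (1 - t)) := Real.log_pos hR
        have htμ : t / μ ≤ Real.log ((1 - t * η) / (1 - t)) := by
          rw [div_le_iff₀ hμ]
          rw [ge_iff_le, div_le_iff₀ hL] at hμ''
          linarith [hμ'']
        have := Real.exp_le_exp.mpr htμ
        rw [Real.exp_log (by positivity)] at this
        calc Real.exp (t / μ) * (1 - t) ≤ (1 - t * η) / (1 - t) * (1 - t) := by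
              apply mul_le_mul_of_nonneg_right this h1t.le
        _ = 1 - t * η := by field_simp
    rw [hγ]
    have h2 : 1 - t ≤ (1 - t * η) / Real.exp (t / μ) := by
      rw [le_div_iff₀ hE]; nlinarith
    have h3 : 1 - (1 - t * η) / Real.exp (t / μ) ≤ t := by linarith
    calc (1/t) * (1 - (1 - t * η) / Real.exp (t / μ)) ≤ (1/t) * t := by
          apply mul_le_mul_of_nonneg_left h3 (by positivity)
    _ = 1 := by field_simp
end

section
/- Let W₀ denote the principal branch of the Lambert W function and let f(z) = 1 + W₀(−e^{−z−1}). Then for every z ∈ (1 + W₀(−2e^{−2})/2, 1], one has f(z) < z. -/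
open Real

/-- t ↦ t·eᵗ is strictly increasing on [-1, ∞). -/
lemma aux_strictMono : StrictMonoOn (fun t : ℝ => t * Real.exp t) (Set.Ici (-1)) := by
  have hd : ∀ t : ℝ, HasDerivAt (fun t : ℝ => t * Real.exp t)
      (1 * Real.exp t + t * Real.exp t) t := fun t =>
    (hasDerivAt_id t).mul (Real.hasDerivAt_exp t)
  apply strictMonoOn_of_deriv_pos (convex_Ici _)
  · exact (continuous_id.mul Real.continuous_exp).continuousOn
  · intro t ht
    rw [interior_Ici, Set.mem_Ioi] at ht
    rw [(hd t).deriv]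
    nlinarith [mul_pos (by linarith : (0:ℝ) < t + 1) (Real.exp_pos t)]

/-- t ↦ (1-t)·e^{2t} is strictly decreasing on [1/2, ∞). -/
lemma aux_strictAnti : StrictAntiOn (fun t : ℝ => (1 - t) * Real.exp (2 * t)) (Set.Ici (1/2 : ℝ)) := by
  have hd : ∀ t : ℝ, HasDerivAt (fun t : ℝ => (1 - t) * Real.exp (2 * t))
      ((-1) * Real.exp (2 * t) + (1 - t) * (Real.exp (2 * t) * 2)) t := by
    intro t
    have h1 : HasDerivAt (fun t : ℝ => 1 - t) (-1) t := (hasDerivAt_id t).const_sub 1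
    have h2 : HasDerivAt (fun t : ℝ => Real.exp (2 * t)) (Real.exp (2 * t) * 2) t := by
      simpa using ((hasDerivAt_id t).const_mul 2).exp
    exact h1.mul h2
  apply strictAntiOn_of_deriv_neg (convex_Ici _)
  · exact ((continuous_const.sub continuous_id).mul
      (Real.continuous_exp.comp (continuous_const.mul continuous_id))).continuousOn
  · intro t ht
    rw [interior_Ici, Set.mem_Ioi] at ht
    rw [(hd t).deriv]
    nlinarith [mul_pos (by linarith : (0:ℝ) < 2 * t - 1) (Real.exp_pos (2 * t))]

/-- With W₀ the principal branch of the Lambert W function and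
f(z) = 1 + W₀(−e^{−z−1}), for every z ∈ (1 + W₀(−2e^{−2})/2, 1] we have
f(z) < z. -/
theorem stmt_3 (W : ℝ → ℝ)
    (hW : ∀ x : ℝ, -(1 / Real.exp 1) ≤ x → W x * Real.exp (W x) = x)
    (hW' : ∀ x : ℝ, -(1 / Real.exp 1) ≤ x → -1 ≤ W x)
    (z : ℝ) (hz : z ∈ Set.Ioc (1 + W (-(2 * Real.exp (-2))) / 2) 1) :
    1 + W (-Real.exp (-z - 1)) < z := by
  obtain ⟨hz1, hz2⟩ := hz
  have hexp2 : (2:ℝ) < Real.exp 1 := by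
    have := Real.add_one_lt_exp (one_ne_zero (α := ℝ))
    linarith
  have he1 : (1:ℝ) / Real.exp 1 = Real.exp (-1) := by
    rw [Real.exp_neg]; field_simp
  -- domain for u := W(-2e^{-2})
  have hdomu : -(1 / Real.exp 1) ≤ -(2 * Real.exp (-2)) := by
    rw [he1]
    have : 2 * Real.exp (-2) ≤ Real.exp (-1) := by
      have h : Real.exp (-2) * Real.exp 1 = Real.exp (-1) := by
        rw [← Real.exp_add]; norm_num
      nlinarith [Real.exp_pos (-2)]
    linarith
  set u := W (-(2 * Real.exp (-2))) with hu_def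
  have hu : u * Real.exp u = -(2 * Real.exp (-2)) := hW _ hdomu
  have hu1 : -1 ≤ u := hW' _ hdomu
  -- u > -1
  have hu1' : -1 < u := by
    rcases lt_or_eq_of_le hu1 with h | h
    · exact h
    · exfalso
      rw [← h] at hu
      have h1 : Real.exp (-1) = 2 * Real.exp (-2) := by
        have := hu
        simp at this
        linarith
      have h2 : Real.exp (-2) * Real.exp 1 = Real.exp (-1) := by
        rw [← Real.exp_add]; norm_num
      nlinarith [Real.exp_pos (-2)]
  have hz0 : (1:ℝ)/2 < 1 + u / 2 := by linarith
  have hzhalf : (1:ℝ)/2 < z := lt_trans hz0 hz1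
  -- g(z₀) = 1
  have hg0 : (1 - (1 + u / 2)) * Real.exp (2 * (1 + u / 2)) = 1 := by
    have h1 : Real.exp (2 * (1 + u / 2)) = Real.exp 2 * Real.exp u := by
      rw [← Real.exp_add]; ring_nf
    have h2 : Real.exp 2 * Real.exp (-2) = 1 := by
      rw [← Real.exp_add]; norm_num
    rw [h1]
    linear_combination (-(Real.exp 2) / 2) * hu + h2
  -- g(z) < 1
  have hglt : (1 - z) * Real.exp (2 * z) < 1 := by
    have h := aux_strictAnti (Set.mem_Ici.mpr (le_of_lt hz0)) (Set.mem_Ici.mpr (le_of_lt hzhalf)) hz1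
    simp only at h
    rw [hg0] at h
    exact h
  -- key inequality : -e^{-z-1} < (z-1) e^{z-1}
  have hab : Real.exp (2 * z) * Real.exp (-z - 1) = Real.exp (z - 1) := by
    rw [← Real.exp_add]; ring_nf
  have hkey : -Real.exp (-z - 1) < (z - 1) * Real.exp (z - 1) := by
    have hb := Real.exp_pos (-z - 1)
    nlinarith [mul_lt_mul_of_pos_right hglt hb]
  -- domain for w := W(-e^{-z-1})
  have hdomw : -(1 / Real.exp 1) ≤ -Real.exp (-z - 1) := by
    rw [he1]
    have : Real.exp (-z - 1) ≤ Real.exp (-1) := Real.exp_le_exp.mpr (by linarith)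
    linarith
  have hw : W (-Real.exp (-z - 1)) * Real.exp (W (-Real.exp (-z - 1))) = -Real.exp (-z - 1) :=
    hW _ hdomw
  have hw1 : -1 ≤ W (-Real.exp (-z - 1)) := hW' _ hdomw
  by_contra hcon
  push_neg at hcon
  have hle : z - 1 ≤ W (-Real.exp (-z - 1)) := by linarith
  have hz1' : (-1:ℝ) ≤ z - 1 := by linarith
  have := aux_strictMono.monotoneOn (Set.mem_Ici.mpr hz1') (Set.mem_Ici.mpr hw1) hle
  rw [hw] at this
  linarith
end

section
/- For every t ∈ (1 + W₀(−2e^{−2})/2, 1], the quantity a = −W₀(−e^{−t−1}) satisfies 1 − t < a ≤ 1/e. -/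
private lemma f_anti : StrictAntiOn (fun a : ℝ => a - Real.log a - 1) (Set.Ioc 0 1) := by
  apply strictAntiOn_of_deriv_neg (convex_Ioc 0 1)
  · apply ContinuousOn.sub _ continuousOn_const
    exact continuousOn_id.sub (Real.continuousOn_log.mono (fun x hx => ne_of_gt hx.1))
  · intro x hx
    rw [interior_Ioc] at hx
    have hd : HasDerivAt (fun a : ℝ => a - Real.log a - 1) (1 - x⁻¹) x :=
      ((hasDerivAt_id x).sub (Real.hasDerivAt_log hx.1.ne')).sub_const 1
    rw [hd.deriv]
    have : 1 < x⁻¹ := (one_lt_inv₀ hx.1).mpr hx.2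
    linarith

private lemma g_mono : StrictMonoOn (fun a : ℝ => Real.log a - 2 * a + 2) (Set.Ioc 0 (1/2)) := by
  apply strictMonoOn_of_deriv_pos (convex_Ioc 0 (1/2))
  · apply ContinuousOn.add _ continuousOn_const
    exact (Real.continuousOn_log.mono (fun x hx => ne_of_gt hx.1)).sub
      (continuousOn_const.mul continuousOn_id)
  · intro x hx
    rw [interior_Ioc] at hx
    have hd : HasDerivAt (fun a : ℝ => Real.log a - 2 * a + 2) (x⁻¹ - 2) x := by
      have := ((Real.hasDerivAt_log hx.1.ne').sub ((hasDerivAt_id x).const_mul 2)).add_const 2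
      simpa using this
    rw [hd.deriv]
    have : 2 < x⁻¹ := by
      rw [lt_inv_comm₀ (by norm_num) hx.1]
      linarith [hx.2]
    linarith

/-- For every t ∈ (1 + W₀(−2e^{−2})/2, 1], the quantity
a = −W₀(−e^{−t−1}) satisfies 1 − t < a ≤ 1/e. -/
theorem stmt_5 (W : ℝ → ℝ)
    (hW : ∀ x : ℝ, -(1 / Real.exp 1) ≤ x → W x * Real.exp (W x) = x)
    (hW' : ∀ x : ℝ, -(1 / Real.exp 1) ≤ x → -1 ≤ W x)
    (t : ℝ) (ht : t ∈ Set.Ioc (1 + W (-(2 * Real.exp (-2))) / 2) 1) :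
    1 - t < -W (-Real.exp (-t - 1)) ∧
    -W (-Real.exp (-t - 1)) ≤ 1 / Real.exp 1 := by
  obtain ⟨ht1, ht2⟩ := ht
  have he : (0:ℝ) < Real.exp 1 := Real.exp_pos 1
  have h2e : (2:ℝ) ≤ Real.exp 1 := by linarith [Real.add_one_le_exp 1]
  -- x₀ := -(2 e^{-2}) is in the domain
  have hprod : Real.exp (-2) * Real.exp 1 * Real.exp 1 = 1 := by
    rw [← Real.exp_add, ← Real.exp_add]; norm_num
  have hexp2 : (0:ℝ) < Real.exp (-2) := Real.exp_pos _
  have hx₀ : -(1 / Real.exp 1) ≤ -(2 * Real.exp (-2)) := by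
    rw [neg_le_neg_iff, le_div_iff₀ he]
    nlinarith
  set w₀ := W (-(2 * Real.exp (-2))) with hw₀def
  have hw₀ : w₀ * Real.exp w₀ = -(2 * Real.exp (-2)) := hW _ hx₀
  have hw₀' : -1 ≤ w₀ := hW' _ hx₀
  have hw₀neg : w₀ < 0 := by
    nlinarith [Real.exp_pos w₀, hexp2]
  set a₀ : ℝ := -w₀ / 2 with ha₀def
  have ha₀pos : 0 < a₀ := by simp [ha₀def]; linarith
  have ha₀le : a₀ ≤ 1/2 := by simp [ha₀def]; linarith
  -- log relation for a₀ : log a₀ - 2 a₀ = -2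
  have hlog₀ : Real.log a₀ - 2 * a₀ = -2 := by
    have h1 : a₀ * Real.exp (-(2*a₀)) = Real.exp (-2) := by
      have hw2 : w₀ = -(2*a₀) := by rw [ha₀def]; ring
      rw [hw2] at hw₀
      linear_combination (-1/2 : ℝ) * hw₀
    have := congrArg Real.log h1
    rw [Real.log_mul ha₀pos.ne' (Real.exp_ne_zero _), Real.log_exp, Real.log_exp] at this
    linarith
  -- now the point a
  have ht0 : 0 < t := by
    rw [ha₀def] at ha₀le; linarith
  have hx : -(1 / Real.exp 1) ≤ -Real.exp (-t - 1) := by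
    rw [neg_le_neg_iff]
    have h1e : (1:ℝ) / Real.exp 1 = Real.exp (-1) := by rw [Real.exp_neg, one_div]
    rw [h1e]
    exact Real.exp_le_exp.mpr (by linarith)
  set w := W (-Real.exp (-t - 1)) with hwdef
  have hw : w * Real.exp w = -Real.exp (-t - 1) := hW _ hx
  have hw' : -1 ≤ w := hW' _ hx
  have hwneg : w < 0 := by
    nlinarith [Real.exp_pos w, Real.exp_pos (-t-1)]
  set a : ℝ := -w with hadef
  have hapos : 0 < a := by simp [hadef]; exact hwneg
  have hale : a ≤ 1 := by simp [hadef]; linarith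
  -- log relation for a : t = a - log a - 1
  have hlog : t = a - Real.log a - 1 := by
    have h1 : a * Real.exp (-a) = Real.exp (-t - 1) := by
      have hw2 : w = -a := by rw [hadef]; ring
      rw [hw2] at hw
      linear_combination -hw
    have := congrArg Real.log h1
    rw [Real.log_mul hapos.ne' (Real.exp_ne_zero _), Real.log_exp, Real.log_exp] at this
    linarith
  -- f(a₀) = 1 - a₀
  have hfa₀ : a₀ - Real.log a₀ - 1 = 1 - a₀ := by linarith
  have haI : a ∈ Set.Ioc (0:ℝ) 1 := ⟨hapos, hale⟩
  have ha₀I : a₀ ∈ Set.Ioc (0:ℝ) 1 := ⟨ha₀pos, by linarith⟩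
  -- a < a₀ from f antitone
  have haa₀ : a < a₀ := by
    by_contra h
    push_neg at h
    have h2 : 1 + w₀/2 = 1 - a₀ := by rw [ha₀def]; ring
    rcases eq_or_lt_of_le h with h' | h'
    · rw [← h'] at hlog
      linarith [hlog, hfa₀, ht1, h2]
    · have := f_anti ha₀I haI h'
      simp only at this
      linarith [hlog, hfa₀, ht1, h2]
  constructor
  · -- 1 - t < a, i.e. log a < 2a - 2
    have hg : Real.log a - 2 * a + 2 < Real.log a₀ - 2 * a₀ + 2 := by
      have := g_mono ⟨hapos, by linarith⟩ ⟨ha₀pos, ha₀le⟩ haa₀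
      simpa using this
    rw [hlog₀] at hg
    linarith [hlog]
  · -- a ≤ 1/e
    have hinvE : (0:ℝ) < 1 / Real.exp 1 := by positivity
    have hfe : 1 / Real.exp 1 - Real.log (1 / Real.exp 1) - 1 = 1 / Real.exp 1 := by
      rw [one_div, Real.log_inv, Real.log_exp]; ring
    by_contra h
    push_neg at h
    have hmem : 1 / Real.exp 1 ∈ Set.Ioc (0:ℝ) 1 := ⟨hinvE, by rw [div_le_one he]; linarith⟩
    have := f_anti hmem haI h
    simp only at this
    rw [hfe] at this
    -- t = f(a) < 1/e, but t > 1 - a₀ ≥ 1/2 > 1/e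
    have h2 : 1 + w₀/2 = 1 - a₀ := by rw [ha₀def]; ring
    have hinv2 : 1 / Real.exp 1 ≤ 1/2 := by
      rw [div_le_div_iff₀ he (by norm_num)]; linarith
    linarith [hlog]
end

section
/- For every z ∈ (0, 1 + W₀(−2e^{−2})/2], one has z/(−ln(1−z)) ≥ 1/2. -/
/-- For every z ∈ (0, 1 + W₀(−2e^{−2})/2],
z/(−ln(1−z)) ≥ 1/2. -/
theorem stmt_9 (W : ℝ → ℝ)
    (hW : ∀ x : ℝ, -(1 / Real.exp 1) ≤ x → W x * Real.exp (W x) = x)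
    (hW' : ∀ x : ℝ, -(1 / Real.exp 1) ≤ x → -1 ≤ W x)
    (z : ℝ) (hz : z ∈ Set.Ioc (0:ℝ) (1 + W (-(2 * Real.exp (-2))) / 2)) :
    z / (-Real.log (1 - z)) ≥ 1 / 2 := by
  obtain ⟨hz0, hz1⟩ := hz
  set x : ℝ := -(2 * Real.exp (-2)) with hx
  have hmem : -(1 / Real.exp 1) ≤ x := by
    rw [hx, neg_le_neg_iff, Real.exp_neg]
    have h2 : Real.exp 2 = Real.exp 1 * Real.exp 1 := by
      rw [← Real.exp_add]; norm_num
    rw [h2, one_div, mul_inv]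
    have hp := Real.exp_pos 1
    have h1 : (Real.exp 1)⁻¹ * Real.exp 1 = 1 := inv_mul_cancel₀ hp.ne'
    nlinarith [Real.exp_one_gt_d9, inv_pos.2 hp, mul_pos (inv_pos.2 hp) (inv_pos.2 hp)]
  have hWx := hW x hmem
  have hW1 := hW' x hmem
  set w : ℝ := W x with hwdef
  have hwneg : w < 0 := by
    by_contra h
    push_neg at h
    have : 0 ≤ w * Real.exp w := mul_nonneg h (Real.exp_pos w).le
    rw [hWx, hx] at this
    nlinarith [Real.exp_pos (-2 : ℝ)]
  set zs : ℝ := 1 + w / 2 with hzs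
  have hzs_pos : (1:ℝ)/2 ≤ zs := by rw [hzs]; linarith
  have hzs_lt1 : zs < 1 := by rw [hzs]; linarith
  -- exp(-2 zs) = 1 - zs
  have hkey : Real.exp (-2 * zs) = 1 - zs := by
    have hwne : w ≠ 0 := ne_of_lt hwneg
    have hexpw : Real.exp w = x / w := by
      field_simp at hWx ⊢
      linarith [hWx]
    have h2 : Real.exp (-2 * zs) = Real.exp (-2) * Real.exp (-w) := by
      rw [← Real.exp_add]; congr 1; rw [hzs]; ring
    rw [h2, Real.exp_neg w, hexpw, hx, hzs]
    have he2 := (Real.exp_pos (-2:ℝ)).ne'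
    field_simp
    ring
  -- exp(-2 z) ≤ 1 - z by convexity
  have hconv : Real.exp (-2 * z) ≤ 1 - z := by
    have ha : 0 ≤ z / zs := div_nonneg hz0.le (by linarith)
    have hb : 0 ≤ 1 - z / zs := by
      have : z / zs ≤ 1 := (div_le_one (by linarith)).2 hz1
      linarith
    have hab : z / zs + (1 - z / zs) = 1 := by ring
    have := convexOn_exp.2 (Set.mem_univ (-2 * zs)) (Set.mem_univ 0) ha hb hab
    simp only [smul_eq_mul, mul_zero, add_zero, Real.exp_zero, mul_one] at this
    have heq : z / zs * (-2 * zs) = -2 * z := by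
      field_simp
    rw [heq, hkey] at this
    have : Real.exp (-2 * z) ≤ z / zs * (1 - zs) + (1 - z / zs) := this
    have hrw : z / zs * (1 - zs) + (1 - z / zs) = 1 - z := by
      field_simp
      ring
    linarith [hrw ▸ this]
  have h1z : 0 < 1 - z := by
    calc (0:ℝ) < Real.exp (-2 * z) := Real.exp_pos _
      _ ≤ 1 - z := hconv
  have hlog : -Real.log (1 - z) ≤ 2 * z := by
    have := Real.log_le_log (Real.exp_pos (-2 * z)) hconv
    rw [Real.log_exp] at this
    linarith
  have hlogpos : 0 < -Real.log (1 - z) := by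
    have : Real.log (1 - z) < 0 := Real.log_neg h1z (by linarith)
    linarith
  rw [ge_iff_le, le_div_iff₀ hlogpos]
  linarith
end

section
/- For η ∈ [0,1), define ζ(η) = 2 − η + W₀(−(1−η)²·e^{η−2}). Then ζ(η) > 0. -/
/-- For η ∈ [0,1), ζ(η) = 2 − η + W₀(−(1−η)²·e^{η−2}) > 0. -/
theorem stmt_12 (W : ℝ → ℝ)
    (hW : ∀ x : ℝ, -(1 / Real.exp 1) ≤ x → W x * Real.exp (W x) = x)
    (hW' : ∀ x : ℝ, -(1 / Real.exp 1) ≤ x → -1 ≤ W x)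
    (η : ℝ) (hη : η ∈ Set.Ico (0:ℝ) 1) :
    0 < 2 - η + W (-((1 - η) ^ 2 * Real.exp (η - 2))) := by
  obtain ⟨h0, h1⟩ := hη
  have hx : -(1 / Real.exp 1) ≤ -((1 - η) ^ 2 * Real.exp (η - 2)) := by
    rw [neg_le_neg_iff]
    have h2 : (1 - η) ^ 2 ≤ 1 := by nlinarith
    have h3 : Real.exp (η - 2) ≤ Real.exp (-1) := by
      apply Real.exp_le_exp.mpr; linarith
    have h4 : Real.exp (-1) = 1 / Real.exp 1 := by
      rw [Real.exp_neg]; ring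
    nlinarith [Real.exp_pos (η - 2), sq_nonneg (1 - η)]
  have := hW' _ hx
  linarith
end

section
/- For η ∈ [0,1) and ζ = 2 − η + W₀(−(1−η)²e^{η−2}), one has (1 − (1−η)e^{−ζ})/ζ < 1/(1−η). -/
/-- For η ∈ [0,1) and ζ = 2 − η + W₀(−(1−η)²e^{η−2}),
(1 − (1−η)e^{−ζ})/ζ < 1/(1−η). -/
theorem stmt_14 (W : ℝ → ℝ)
    (hW : ∀ x : ℝ, -(1 / Real.exp 1) ≤ x → W x * Real.exp (W x) = x)
    (hW' : ∀ x : ℝ, -(1 / Real.exp 1) ≤ x → -1 ≤ W x)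
    (η ζ : ℝ) (hη : η ∈ Set.Ico (0:ℝ) 1)
    (hζ : ζ = 2 - η + W (-((1 - η) ^ 2 * Real.exp (η - 2)))) :
    (1 - (1 - η) * Real.exp (-ζ)) / ζ < 1 / (1 - η) := by
  obtain ⟨hη0, hη1⟩ := hη
  have hη1' : 0 < 1 - η := by linarith
  set x : ℝ := -((1 - η) ^ 2 * Real.exp (η - 2)) with hxdef
  have hx : -(1 / Real.exp 1) ≤ x := by
    have h1 : Real.exp (η - 2) ≤ Real.exp (-1) := by
      apply Real.exp_le_exp.mpr; linarith
    have h2 : (1 - η) ^ 2 ≤ 1 := by nlinarith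
    have h3 : (1 - η) ^ 2 * Real.exp (η - 2) ≤ Real.exp (-1) := by
      nlinarith [Real.exp_pos (η - 2), Real.exp_pos (-1)]
    have h4 : Real.exp (-1) = 1 / Real.exp 1 := by
      rw [Real.exp_neg]; field_simp
    rw [hxdef]; linarith [h4 ▸ h3]
  have hw := hW x hx
  have hw1 := hW' x hx
  set w : ℝ := W x with hwdef
  have hζpos : 0 < ζ := by rw [hζ]; linarith
  have hexp : Real.exp (-ζ) = Real.exp (η - 2) * Real.exp (-w) := by
    rw [← Real.exp_add]
    congr 1
    rw [hζ]; ring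
  have hEw : Real.exp w * Real.exp (-w) = 1 := by
    rw [← Real.exp_add]; simp
  have key : 1 - (1 - η) * Real.exp (-ζ) = (1 - η + w) / (1 - η) := by
    have h3 : Real.exp (η - 2) = -(w * Real.exp w) / (1 - η) ^ 2 := by
      rw [hw, hxdef]; field_simp
    rw [hexp, h3]
    field_simp
    linear_combination w * hEw
  rw [key, div_div, div_lt_div_iff₀ (by positivity : (0:ℝ) < (1 - η) * ζ) hη1']
  have : 1 - η + w < ζ := by rw [hζ]; linarith
  nlinarith
end

section
/- Let W₀ be the principal branch of the Lambert W function and, for η ∈ [0,1), set h(η) = −(1−η)²e^{η−2} and Q(η) = (1−η)·(2 − η + W₀(h(η)))/(1 − η + W₀(h(η))). Then lim_{η → 1⁻} Q(η) = 1. -/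
/-- With W₀ the principal Lambert W branch,
h(η) = −(1−η)²e^{η−2} and Q(η) = (1−η)·(2 − η + W₀(h(η)))/(1 − η + W₀(h(η))),
one has lim_{η → 1⁻} Q(η) = 1. -/
theorem stmt_19 (W : ℝ → ℝ)
    (hW : ∀ x : ℝ, -(1 / Real.exp 1) ≤ x → W x * Real.exp (W x) = x)
    (hW' : ∀ x : ℝ, -(1 / Real.exp 1) ≤ x → -1 ≤ W x) :
    Filter.Tendsto
      (fun η : ℝ =>
        (1 - η) * (2 - η + W (-((1 - η) ^ 2 * Real.exp (η - 2))))
          / (1 - η + W (-((1 - η) ^ 2 * Real.exp (η - 2)))))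
      (nhdsWithin 1 (Set.Iio 1)) (nhds 1) := by
  have key : ∀ η ∈ Set.Ioo (1/2 : ℝ) 1,
      1 ≤ (1 - η) * (2 - η + W (-((1 - η) ^ 2 * Real.exp (η - 2))))
          / (1 - η + W (-((1 - η) ^ 2 * Real.exp (η - 2)))) ∧
      (1 - η) * (2 - η + W (-((1 - η) ^ 2 * Real.exp (η - 2))))
          / (1 - η + W (-((1 - η) ^ 2 * Real.exp (η - 2)))) ≤ 1 + 4 * (1 - η) := by
    intro η hη
    obtain ⟨h1, h2⟩ := hη
    set ε := 1 - η with hε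
    have hε0 : 0 < ε := by simp [hε]; linarith
    have hε2 : ε < 1/2 := by simp [hε]; linarith
    set x := -((1 - η) ^ 2 * Real.exp (η - 2)) with hx
    have hexp1 : Real.exp (η - 2) ≤ Real.exp (-1) := Real.exp_le_exp.2 (by linarith)
    have hexppos : (0:ℝ) < Real.exp (η - 2) := Real.exp_pos _
    have hsq1 : (1 - η) ^ 2 ≤ 1 := by nlinarith
    have hsqpos : 0 < (1 - η) ^ 2 := pow_pos (by linarith) 2
    have hxge : -(1 / Real.exp 1) ≤ x := by
      rw [hx]
      have he : Real.exp (-1) = 1 / Real.exp 1 := by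
        rw [Real.exp_neg]; ring
      nlinarith [Real.exp_pos (-1)]
    set u := W x with hu
    have huw : u * Real.exp u = x := hW x hxge
    have hum1 : -1 ≤ u := hW' x hxge
    have hxneg : x < 0 := by
      rw [hx]; nlinarith
    have huneg : u < 0 := by
      by_contra h
      push_neg at h
      nlinarith [Real.exp_pos u]
    have hexpu : Real.exp (-1) ≤ Real.exp u := Real.exp_le_exp.2 hum1
    -- bound: -ε^2 ≤ u
    have hub : -(ε^2) ≤ u := by
      have h1' : (-u) * Real.exp (-1) ≤ (-u) * Real.exp u := by
        nlinarith
      have h2' : (-u) * Real.exp u = ε^2 * Real.exp (η - 2) := by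
        have : (1 - η)^2 = ε^2 := by rw [hε]
        nlinarith [huw]
      have h3' : ε^2 * Real.exp (η - 2) ≤ ε^2 * Real.exp (-1) := by
        nlinarith [sq_nonneg ε]
      nlinarith [Real.exp_pos (-1)]
    have hd : 0 < 1 - η + u := by nlinarith
    constructor
    · rw [le_div_iff₀ hd]
      nlinarith
    · rw [div_le_iff₀ hd]
      nlinarith
  have hmem : Set.Ioo (1/2 : ℝ) 1 ∈ nhdsWithin (1:ℝ) (Set.Iio 1) :=
    Ioo_mem_nhdsLT_of_mem (by constructor <;> norm_num)
  have hub : Filter.Tendsto (fun η : ℝ => 1 + 4 * (1 - η))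
      (nhdsWithin 1 (Set.Iio 1)) (nhds 1) := by
    have h : Filter.Tendsto (fun η : ℝ => 1 + 4 * (1 - η)) (nhds 1)
        (nhds (1 + 4 * (1 - 1))) := by
      exact (continuous_const.add (continuous_const.mul
        (continuous_const.sub continuous_id))).tendsto 1
    simpa using h.mono_left nhdsWithin_le_nhds
  refine tendsto_of_tendsto_of_tendsto_of_le_of_le' tendsto_const_nhds hub ?_ ?_
  · filter_upwards [hmem] with η hη using (key η hη).1
  · filter_upwards [hmem] with η hη using (key η hη).2
end
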